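/- Let K be a field of characteristic p > 0, let A, B ∈ K, let n ≥ 2 be an integer and assume p > 2n + 3. Define c₁ = −A/5, c₂ = −B/7, and for 3 ≤ k ≤ n define c_k = (3/((k−2)(2k+3))) · Σ_{i=1}^{k−2} c_i c_{k−1−i}; all the integers inverted here are nonzero in K, being positive and at most 2n+3 < p. Then the polynomial P_n = 1 + Σ_{k=1}^{n} c_k z^{2k+2}, viewed in K[[z]], satisfies (z·P_n' − 2·P_n)² ≡ 4·(P_n³ + A·z⁴·P_n + B·z⁶) mod z^{2n+3}. -/

import Mathlib

open PowerSeries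

/-- In characteristic `p > 2n+3`, the coefficients `c_1, …, c_n` defined by
`c₁ = −A/5`, `c₂ = −B/7` and the recurrence
`c_k = (3/((k−2)(2k+3)))·Σ_{i=1}^{k−2} c_i c_{k−1−i}` (3 ≤ k ≤ n) give a polynomial
`P_n = 1 + Σ_{k=1}^n c_k z^(2k+2)` satisfying the power-series Weierstrass equation
`(z·P_n' − 2·P_n)² ≡ 4·(P_n³ + A·z⁴·P_n + B·z⁶) mod z^(2n+3)`. -/
theorem weierstrass_truncation_positive_char {K : Type*} [Field K]
    (p : ℕ) [CharP K p] (A B : K) (n : ℕ) (hn : 2 ≤ n) (hp : 2 * n + 3 < p)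
    (c : ℕ → K) (hc1 : c 1 = -A / 5) (hc2 : c 2 = -B / 7)
    (hck : ∀ k, 3 ≤ k → k ≤ n →
      c k = 3 / (((k : K) - 2) * (2 * (k : K) + 3)) *
        ∑ i ∈ Finset.Icc 1 (k - 2), c i * c (k - 1 - i))
    (Pn : PowerSeries K)
    (hPn : Pn = 1 + ∑ k ∈ Finset.Icc 1 n, C (c k) * X ^ (2 * k + 2)) :
    ∀ j < 2 * n + 3,
      coeff j ((X * d⁄dX K Pn - 2 * Pn) ^ 2)
        = coeff j (4 * (Pn ^ 3 + C A * X ^ 4 * Pn + C B * X ^ 6)) := by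
  classical
  have hcast : ∀ m : ℕ, 0 < m → m < p → (m : K) ≠ 0 := by
    intro m hm hmp h
    rw [CharP.cast_eq_zero_iff K p] at h
    exact absurd (Nat.le_of_dvd hm h) (not_le.mpr hmp)
  have h5 : (5 : K) ≠ 0 := by
    have := hcast 5 (by norm_num) (by omega); simpa using this
  have h7 : (7 : K) ≠ 0 := by
    have := hcast 7 (by norm_num) (by omega); simpa using this
  set S : PowerSeries K := ∑ k ∈ Finset.Icc 1 n, C (c k) * X ^ (2 * k + 2) with hS
  have hPnS : Pn = 1 + S := hPn
  have hS_eq : ∀ k, 1 ≤ k → k ≤ n → coeff (2 * k + 2) S = c k := by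
    intro k h1 h2
    rw [hS, map_sum, Finset.sum_eq_single k]
    · rw [coeff_C_mul_X_pow, if_pos rfl]
    · intro b _ hbk
      rw [coeff_C_mul_X_pow, if_neg (by omega)]
    · intro h; exact absurd (Finset.mem_Icc.mpr ⟨h1, h2⟩) h
  have hS_zero : ∀ j, (∀ k, 1 ≤ k → k ≤ n → j ≠ 2 * k + 2) → coeff j S = 0 := by
    intro j hjk
    rw [hS, map_sum]
    refine Finset.sum_eq_zero fun k hk => ?_
    rw [Finset.mem_Icc] at hk
    rw [coeff_C_mul_X_pow, if_neg (hjk k hk.1 hk.2)]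
  have hS2 : S ^ 2 = ∑ k ∈ Finset.Icc 1 n, ∑ l ∈ Finset.Icc 1 n,
      C (c k * c l) * X ^ (2 * (k + l) + 4) := by
    rw [sq, hS, Finset.sum_mul_sum]
    refine Finset.sum_congr rfl fun k _ => Finset.sum_congr rfl fun l _ => ?_
    rw [map_mul, mul_mul_mul_comm, ← pow_add,
      show 2 * k + 2 + (2 * l + 2) = 2 * (k + l) + 4 from by ring]
  have hS2_eq : ∀ m, 3 ≤ m → m ≤ n → coeff (2 * m + 2) (S ^ 2)
      = ∑ i ∈ Finset.Icc 1 (m - 2), c i * c (m - 1 - i) := by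
    intro m h3 hmn
    rw [hS2, map_sum]
    have hinner : ∀ k ∈ Finset.Icc 1 n,
        coeff (2 * m + 2) (∑ l ∈ Finset.Icc 1 n, C (c k * c l) * X ^ (2 * (k + l) + 4))
        = if k ∈ Finset.Icc 1 (m - 2) then c k * c (m - 1 - k) else 0 := by
      intro k hk
      rw [Finset.mem_Icc] at hk
      rw [map_sum]
      by_cases hkm : k ≤ m - 2
      · rw [Finset.sum_eq_single (m - 1 - k)]
        · rw [coeff_C_mul_X_pow, if_pos (by omega),
            if_pos (Finset.mem_Icc.mpr ⟨by omega, hkm⟩)]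
        · intro b hb hbne
          rw [coeff_C_mul_X_pow, if_neg (by omega)]
        · intro habs
          exact absurd (Finset.mem_Icc.mpr ⟨by omega, by omega⟩) habs
      · rw [if_neg (by rw [Finset.mem_Icc]; omega)]
        refine Finset.sum_eq_zero fun l hl => ?_
        rw [Finset.mem_Icc] at hl
        rw [coeff_C_mul_X_pow, if_neg (by omega)]
    rw [Finset.sum_congr rfl hinner, Finset.sum_ite_mem,
      Finset.inter_eq_right.mpr (Finset.Icc_subset_Icc_right (by omega))]
  have hS2_zero : ∀ j, j < 2 * n + 3 → (∀ m, 3 ≤ m → m ≤ n → j ≠ 2 * m + 2) →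
      coeff j (S ^ 2) = 0 := by
    intro j hj hm
    rw [hS2, map_sum]
    refine Finset.sum_eq_zero fun k hk => ?_
    rw [map_sum]
    refine Finset.sum_eq_zero fun l hl => ?_
    rw [Finset.mem_Icc] at hk hl
    rw [coeff_C_mul_X_pow, if_neg ?_]
    intro heq
    exact hm (k + l + 1) (by omega) (by omega) (by omega)
  have hXdX : ∀ (f : PowerSeries K) (j : ℕ),
      coeff j (X * d⁄dX K f) = (j : K) * coeff j f := by
    intro f j
    rw [← pow_one (X : PowerSeries K), coeff_X_pow_mul']
    cases j with
    | zero => norm_num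
    | succ m =>
      rw [if_pos (by omega)]
      simp only [Nat.add_sub_cancel, coeff_derivative]
      push_cast; ring
  have hPc : ∀ j, coeff j Pn = (if j = 0 then (1 : K) else 0) + coeff j S := by
    intro j; rw [hPnS, map_add, coeff_one]
  have hPn2 : Pn ^ 2 = 1 + 2 * S + S ^ 2 := by rw [hPnS]; ring
  have h2C : (2 : PowerSeries K) = C 2 := (map_ofNat _ 2).symm
  have h4C : (4 : PowerSeries K) = C 4 := (map_ofNat _ 4).symm
  have h6C : (6 : PowerSeries K) = C 6 := (map_ofNat _ 6).symm
  set Q : PowerSeries K := d⁄dX K Pn with hQ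
  set R : PowerSeries K := d⁄dX K Q with hR
  set G : PowerSeries K :=
    X ^ 2 * R - 4 * (X * Q) + 6 * Pn - 6 * Pn ^ 2 - C (2 * A) * X ^ 4 with hGdef
  -- coefficients of Pn at low degrees
  have p0 : coeff 0 Pn = 1 := by
    rw [hPc, hS_zero 0 (fun k h1 h2 => by omega)]; norm_num
  have p1 : coeff 1 Pn = 0 := by
    rw [hPc, hS_zero 1 (fun k h1 h2 => by omega)]; norm_num
  have p2 : coeff 2 Pn = 0 := by
    rw [hPc, hS_zero 2 (fun k h1 h2 => by omega)]; norm_num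
  have p3 : coeff 3 Pn = 0 := by
    rw [hPc, hS_zero 3 (fun k h1 h2 => by omega)]; norm_num
  have p5 : coeff 5 Pn = 0 := by
    rw [hPc, hS_zero 5 (fun k h1 h2 => by omega)]; norm_num
  have p4 : coeff 4 Pn = c 1 := by
    have := hS_eq 1 le_rfl (by omega)
    norm_num at this
    rw [hPc, this]; norm_num
  have p6 : coeff 6 Pn = c 2 := by
    have := hS_eq 2 (by omega) hn
    norm_num at this
    rw [hPc, this]; norm_num
  -- coefficients of G vanish below 2n+3
  have hG0 : ∀ j, j < 2 * n + 3 → coeff j G = 0 := by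
    intro j hj
    have e1 : coeff j (X ^ 2 * R) = (j : K) * ((j : K) - 1) * coeff j Pn := by
      rw [coeff_X_pow_mul']
      by_cases h2j : 2 ≤ j
      · rw [if_pos h2j, hR, coeff_derivative, hQ, coeff_derivative,
          show j - 2 + 1 = j - 1 from by omega, show j - 1 + 1 = j from by omega,
          show ((j - 1 : ℕ) : K) = (j : K) - 1 from by
            rw [Nat.cast_sub (by omega)]; norm_num,
          show ((j - 2 : ℕ) : K) = (j : K) - 2 from by
            rw [Nat.cast_sub (by omega)]; norm_num]
        ring
      · rw [if_neg h2j]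
        have : j = 0 ∨ j = 1 := by omega
        rcases this with rfl | rfl
        · norm_num
        · norm_num
    have key : coeff j G = ((j : K) * ((j : K) - 1) - 4 * (j : K) + 6) * coeff j Pn
        - 6 * coeff j (Pn ^ 2) - (if j = 4 then 2 * A else 0) := by
      rw [hGdef]
      simp only [map_sub, map_add]
      rw [e1, h4C, h6C, coeff_C_mul, coeff_C_mul, coeff_C_mul, hQ, hXdX, coeff_C_mul_X_pow]
      ring
    have ePn2 : coeff j (Pn ^ 2)
        = (if j = 0 then (1 : K) else 0) + 2 * coeff j S + coeff j (S ^ 2) := by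
      rw [hPn2, map_add, map_add, coeff_one, h2C, coeff_C_mul]
    by_cases hex : ∃ k, 1 ≤ k ∧ k ≤ n ∧ j = 2 * k + 2
    · obtain ⟨k, hk1, hkn, rfl⟩ := hex
      rw [key, hPc, ePn2, hS_eq k hk1 hkn,
        if_neg (show ¬ 2 * k + 2 = 0 from by omega)]
      rcases Nat.lt_or_ge k 3 with hk3 | hk3
      · interval_cases k
        · rw [hS2_zero 4 (by omega) (fun m h3m hmn h => by omega),
            if_pos (by norm_num), hc1]
          push_cast
          field_simp
          ring
        · rw [hS2_zero 6 (by omega) (fun m h3m hmn h => by omega),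
            if_neg (by norm_num)]
          push_cast
          ring
      · rw [hS2_eq k hk3 hkn, if_neg (show ¬ 2 * k + 2 = 4 from by omega)]
        have hk2 : ((k : K) - 2) ≠ 0 := by
          rw [show ((k : K) - 2) = ((k - 2 : ℕ) : K) from by
            rw [Nat.cast_sub (by omega)]; norm_num]
          exact hcast (k - 2) (by omega) (by omega)
        have hk23 : (2 * (k : K) + 3) ≠ 0 := by
          rw [show (2 * (k : K) + 3) = ((2 * k + 3 : ℕ) : K) from by push_cast; ring]
          exact hcast (2 * k + 3) (by omega) (by omega)
        have hrec : ((k : K) - 2) * (2 * (k : K) + 3) * c k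
            = 3 * ∑ i ∈ Finset.Icc 1 (k - 2), c i * c (k - 1 - i) := by
          rw [hck k hk3 hkn]
          field_simp
          rw [div_eq_iff (show (k : K) * 2 + 3 ≠ 0 by rw [mul_comm]; exact hk23)]; ring
        push_cast
        linear_combination 2 * hrec
    · have hsj : coeff j S = 0 :=
        hS_zero j (fun k hk1 hkn h => hex ⟨k, hk1, hkn, h⟩)
      have ht : coeff j (S ^ 2) = 0 :=
        hS2_zero j hj (fun m h3 hmn h => hex ⟨m, by omega, hmn, h⟩)
      rw [key, hPc, ePn2, hsj, ht,
        if_neg (show ¬ j = 4 from fun h => hex ⟨1, le_rfl, by omega, by omega⟩)]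
      by_cases hj0 : j = 0
      · subst hj0; norm_num
      · rw [if_neg hj0]; ring
  set E : PowerSeries K :=
    (X * Q - 2 * Pn) ^ 2 - 4 * (Pn ^ 3 + C A * X ^ 4 * Pn + C B * X ^ 6) with hEdef
  have hkey : X * d⁄dX K E - 6 * E = 2 * (X * Q - 2 * Pn) * G := by
    rw [hEdef, hGdef, hR, hQ]
    simp only [h2C, h4C, map_sub, map_add, Derivation.leibniz, Derivation.leibniz_pow,
      derivative_X, derivative_C, smul_eq_mul, nsmul_eq_mul, map_mul]
    simp only [map_ofNat]
    ring
  have hstep : ∀ j, j < 2 * n + 3 → ((j : K) - 6) * coeff j E = 0 := by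
    intro j hj
    have h1 : coeff j (X * d⁄dX K E - 6 * E) = coeff j (2 * (X * Q - 2 * Pn) * G) := by
      rw [hkey]
    rw [map_sub, hXdX, h6C, coeff_C_mul] at h1
    have h2 : coeff j (2 * (X * Q - 2 * Pn) * G) = 0 := by
      rw [coeff_mul]
      refine Finset.sum_eq_zero fun pq hpq => ?_
      rw [Finset.HasAntidiagonal.mem_antidiagonal] at hpq
      rw [hG0 pq.2 (by omega), mul_zero]
    rw [h2] at h1
    linear_combination h1
  -- the j = 6 case
  have hw : ∀ u : ℕ, coeff u (X * Q - 2 * Pn) = ((u : K) - 2) * coeff u Pn := by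
    intro u; rw [map_sub, hQ, hXdX, h2C, coeff_C_mul]; ring
  have hE6 : coeff 6 E = 0 := by
    have cW2 : coeff 6 ((X * Q - 2 * Pn) ^ 2) = -16 * c 2 := by
      rw [sq, coeff_mul, Finset.Nat.sum_antidiagonal_eq_sum_range_succ_mk]
      simp only [Finset.sum_range_succ, Finset.sum_range_zero, hw]
      norm_num [p0, p1, p2, p3, p4, p5, p6]
      ring
    have q4 : coeff 4 (Pn ^ 2) = 2 * c 1 := by
      rw [sq, coeff_mul, Finset.Nat.sum_antidiagonal_eq_sum_range_succ_mk]
      simp only [Finset.sum_range_succ, Finset.sum_range_zero]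
      norm_num [p0, p1, p2, p3, p4]
      ring
    have q0 : coeff 0 (Pn ^ 2) = 1 := by
      rw [sq, coeff_mul, Finset.Nat.sum_antidiagonal_eq_sum_range_succ_mk]
      simp [p0]
    have q1 : coeff 1 (Pn ^ 2) = 0 := by
      rw [sq, coeff_mul, Finset.Nat.sum_antidiagonal_eq_sum_range_succ_mk]
      simp only [Finset.sum_range_succ, Finset.sum_range_zero]
      norm_num [p0, p1]
    have q2 : coeff 2 (Pn ^ 2) = 0 := by
      rw [sq, coeff_mul, Finset.Nat.sum_antidiagonal_eq_sum_range_succ_mk]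
      simp only [Finset.sum_range_succ, Finset.sum_range_zero]
      norm_num [p0, p1, p2]
    have q3 : coeff 3 (Pn ^ 2) = 0 := by
      rw [sq, coeff_mul, Finset.Nat.sum_antidiagonal_eq_sum_range_succ_mk]
      simp only [Finset.sum_range_succ, Finset.sum_range_zero]
      norm_num [p0, p1, p2, p3]
    have q5 : coeff 5 (Pn ^ 2) = 0 := by
      rw [sq, coeff_mul, Finset.Nat.sum_antidiagonal_eq_sum_range_succ_mk]
      simp only [Finset.sum_range_succ, Finset.sum_range_zero]
      norm_num [p0, p1, p2, p3, p4, p5]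
    have q6 : coeff 6 (Pn ^ 2) = 2 * c 2 := by
      rw [sq, coeff_mul, Finset.Nat.sum_antidiagonal_eq_sum_range_succ_mk]
      simp only [Finset.sum_range_succ, Finset.sum_range_zero]
      norm_num [p0, p1, p2, p3, p4, p5, p6]
      ring
    have cP3 : coeff 6 (Pn ^ 3) = 3 * c 2 := by
      rw [pow_succ, coeff_mul, Finset.Nat.sum_antidiagonal_eq_sum_range_succ_mk]
      simp only [Finset.sum_range_succ, Finset.sum_range_zero]
      norm_num [p0, p1, p2, p3, p4, p5, p6, q0, q1, q2, q3, q4, q5, q6]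
      ring
    have cAX : coeff 6 (C A * X ^ 4 * Pn) = 0 := by
      rw [mul_assoc, coeff_C_mul, mul_comm ((X : PowerSeries K) ^ 4) Pn, coeff_mul_X_pow']
      norm_num [p2]
    have cBX : coeff 6 (C B * X ^ 6) = B := by
      rw [coeff_C_mul_X_pow, if_pos rfl]
    rw [hEdef, map_sub, h4C, coeff_C_mul, map_add, map_add, cW2, cP3, cAX, cBX, hc2]
    field_simp
    ring
  intro j hj
  have hEj : coeff j E = 0 := by
    by_cases h6 : j = 6
    · subst h6; exact hE6
    · have hne : ((j : K) - 6) ≠ 0 := by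
        rcases Nat.lt_or_ge j 6 with h | h
        · intro hcontra
          have h0 : ((6 - j : ℕ) : K) = 0 := by
            rw [Nat.cast_sub h.le]
            push_cast
            linear_combination -hcontra
          exact hcast (6 - j) (by omega) (by omega) h0
        · have hj6 : 6 < j := by omega
          intro hcontra
          have h0 : ((j - 6 : ℕ) : K) = 0 := by
            rw [Nat.cast_sub hj6.le]
            push_cast
            linear_combination hcontra
          exact hcast (j - 6) (by omega) (by omega) h0
      have := hstep j hj
      rcases mul_eq_zero.mp this with h | h
      · exact absurd h hne
      · exact h
  have hsplit : coeff j E = coeff j ((X * Q - 2 * Pn) ^ 2)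
      - coeff j (4 * (Pn ^ 3 + C A * X ^ 4 * Pn + C B * X ^ 6)) := by
    rw [hEdef, map_sub]
  rw [hsplit] at hEj
  exact sub_eq_zero.mp hEj
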